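/- arXiv:2204.04924 — 3 statements merged into one kernel-verified Lean document; each statement's English description precedes it below -/
import Mathlib

section
/- Let A be a generalised Cartan matrix with a free realisation (X^∨, X, Δ^∨, Δ) over ℤ (i.e. the simple roots {α_s} are ℤ-linearly independent). Then the representation of W on X given by r_s(λ) = λ − ⟨α_s^∨, λ⟩α_s is faithful: if w ∈ W acts as the identity on X, then w = 1. -/
/-- A generalised Cartan matrix over `ℤ`: `a s s = 2`, `a s t ≤ 0` off the diagonal, and
`a s t = 0 ↔ a t s = 0`. -/
structure GCM (S : Type*) where
  a : S → S → ℤ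
  diagonal : ∀ s, a s s = 2
  off_diagonal_nonpos : ∀ s t, s ≠ t → a s t ≤ 0
  zero_iff : ∀ s t, a s t = 0 → a t s = 0

/-- The entries of the Coxeter matrix associated to a generalised Cartan matrix:
`m s t = 2, 3, 4, 6, ∞` (encoded `0`) according as `a s t * a t s = 0, 1, 2, 3, ≥ 4`. -/
def GCM.m {S : Type*} [DecidableEq S] (A : GCM S) (s t : S) : ℕ :=
  if s = t then 1
  else if A.a s t * A.a t s = 0 then 2
  else if A.a s t * A.a t s = 1 then 3
  else if A.a s t * A.a t s = 2 then 4
  else if A.a s t * A.a t s = 3 then 6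
  else 0

/-! ### Auxiliary material for the proof -/

/-- The coefficient recurrence for the action of alternating words in a rank-2 subsystem. -/
def FRFseq (P : ℤ) : ℕ → ℤ × ℤ
  | 0 => (1, 0)
  | n + 1 =>
    if Even n then ((FRFseq P n).1, (FRFseq P n).1 - (FRFseq P n).2)
    else (P * (FRFseq P n).2 - (FRFseq P n).1, (FRFseq P n).2)

theorem FRFseq_zero (P : ℤ) : FRFseq P 0 = (1, 0) := rfl

theorem FRFseq_succ_even (P : ℤ) {n : ℕ} (h : Even n) :
    FRFseq P (n + 1) = ((FRFseq P n).1, (FRFseq P n).1 - (FRFseq P n).2) := by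
  rw [FRFseq, if_pos h]

theorem FRFseq_succ_odd (P : ℤ) {n : ℕ} (h : ¬ Even n) :
    FRFseq P (n + 1) = (P * (FRFseq P n).2 - (FRFseq P n).1, (FRFseq P n).2) := by
  rw [FRFseq, if_neg h]

theorem FRFseq_nonneg_of_big {P : ℤ} (hP : 4 ≤ P) (n : ℕ) :
    0 ≤ (FRFseq P n).1 ∧ 0 ≤ (FRFseq P n).2 ∧
      (if Even n then 2 * (FRFseq P n).2 ≤ (FRFseq P n).1
        else (FRFseq P n).1 ≤ 2 * (FRFseq P n).2) := by
  induction n with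
  | zero => norm_num [FRFseq_zero]
  | succ n ih =>
    rcases Nat.even_or_odd n with he | ho
    · rw [if_pos he] at ih
      rw [FRFseq_succ_even P he]
      rw [if_neg (by simp [Nat.even_add_one, he])]
      refine ⟨ih.1, by omega, by omega⟩
    · have hne : ¬ Even n := Nat.not_even_iff_odd.mpr ho
      rw [if_neg hne] at ih
      rw [FRFseq_succ_odd P hne]
      rw [if_pos (by simp [Nat.even_add_one, hne])]
      obtain ⟨h1, h2, h3⟩ := ih
      have key : 2 * (FRFseq P n).2 ≤ P * (FRFseq P n).2 - (FRFseq P n).1 := by nlinarith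
      exact ⟨by omega, h2, by omega⟩

theorem FRFseq_nonneg (P : ℤ) (n : ℕ)
    (h : (P = 0 ∧ n < 2) ∨ (P = 1 ∧ n < 3) ∨ (P = 2 ∧ n < 4) ∨ (P = 3 ∧ n < 6) ∨ 4 ≤ P) :
    0 ≤ (FRFseq P n).1 ∧ 0 ≤ (FRFseq P n).2 := by
  rcases h with ⟨rfl, hn⟩ | ⟨rfl, hn⟩ | ⟨rfl, hn⟩ | ⟨rfl, hn⟩ | hP
  · interval_cases n <;> decide
  · interval_cases n <;> decide
  · interval_cases n <;> decide
  · interval_cases n <;> decide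
  · exact ⟨(FRFseq_nonneg_of_big hP n).1, (FRFseq_nonneg_of_big hP n).2.1⟩

open CoxeterSystem List

section Aux

variable {S : Type*} {W : Type*} [Group W] {M : CoxeterMatrix S} (cs : CoxeterSystem M W)

local prefix:100 "π" => cs.wordProd
local prefix:100 "ℓ" => cs.length

/-- A reduced word has no two adjacent equal letters. -/
theorem FRF.chain'_of_reduced : ∀ σ : List S, cs.IsReduced σ → σ.Chain' (· ≠ ·) := by
  intro σ hσ
  induction σ with
  | nil => exact List.isChain_nil
  | cons x rest ih =>
    have hrest : cs.IsReduced rest := by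
      have := hσ.drop 1
      simpa using this
    show List.IsChain _ _
    rw [List.isChain_cons]
    refine ⟨fun y hy hxy => ?_, ih hrest⟩
    subst hxy
    cases rest with
    | nil => simp at hy
    | cons a r2 =>
      have ha : a = x := by simpa using hy
      subst ha
      have hπ : π (a :: a :: r2) = π r2 := by
        rw [cs.wordProd_cons, cs.wordProd_cons, cs.simple_mul_simple_cancel_left]
      have h1 : ℓ (π (a :: a :: r2)) ≤ r2.length := hπ ▸ cs.length_wordProd_le r2
      have h2 : ℓ (π (a :: a :: r2)) = (a :: a :: r2).length := hσ
      simp at h1 h2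
      omega

/-- A word over a two-letter alphabet with no adjacent equal letters is alternating. -/
theorem FRF.eq_alternatingWord (i i' : S) :
    ∀ σ : List S, σ.Chain' (· ≠ ·) → (∀ x ∈ σ, x = i ∨ x = i') →
      σ = alternatingWord i i' σ.length ∨ σ = alternatingWord i' i σ.length := by
  intro σ
  induction σ with
  | nil => intro _ _; left; rfl
  | cons x rest ih =>
    intro hchain hmem
    have hrest := (List.isChain_cons.mp hchain).2
    have hhead := (List.isChain_cons.mp hchain).1
    have hmemr : ∀ y ∈ rest, y = i ∨ y = i' := fun y hy => hmem y (List.mem_cons_of_mem x hy)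
    have hx := hmem x (List.mem_cons_self)
    rcases ih hrest hmemr with hr | hr
    · cases hn : rest.length with
      | zero =>
        have : rest = [] := List.eq_nil_of_length_eq_zero hn
        subst this
        rcases hx with rfl | rfl
        · right; simp [alternatingWord]
        · left; simp [alternatingWord]
      | succ k =>
        rw [hn, alternatingWord_succ'] at hr
        have hy : rest.head? = some (if Even k then i' else i) := by rw [hr]; rfl
        have hxy : x ≠ (if Even k then i' else i) := hhead _ hy
        have hxval : x = (if Even (k+1) then i' else i) := by
          rcases hx with rfl | rfl
          · rcases Nat.even_or_odd k with he | ho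
            · simp [Nat.even_add_one, he]
            · exact absurd (by simp [Nat.not_even_iff_odd.mpr ho]) hxy
          · rcases Nat.even_or_odd k with he | ho
            · exact absurd (by simp [he]) hxy
            · simp [Nat.even_add_one, Nat.not_even_iff_odd.mpr ho]
        left
        rw [← alternatingWord_succ'] at hr
        rw [List.length_cons, hn, alternatingWord_succ', ← hxval, hr]
    · cases hn : rest.length with
      | zero =>
        have : rest = [] := List.eq_nil_of_length_eq_zero hn
        subst this
        rcases hx with rfl | rfl
        · right; simp [alternatingWord]
        · left; simp [alternatingWord]
      | succ k =>
        rw [hn, alternatingWord_succ'] at hr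
        have hy : rest.head? = some (if Even k then i else i') := by rw [hr]; rfl
        have hxy : x ≠ (if Even k then i else i') := hhead _ hy
        have hxval : x = (if Even (k+1) then i else i') := by
          rcases hx with rfl | rfl
          · rcases Nat.even_or_odd k with he | ho
            · exact absurd (by simp [he]) hxy
            · simp [Nat.even_add_one, Nat.not_even_iff_odd.mpr ho]
          · rcases Nat.even_or_odd k with he | ho
            · simp [Nat.even_add_one, he]
            · exact absurd (by simp [Nat.not_even_iff_odd.mpr ho]) hxy
        right
        rw [← alternatingWord_succ'] at hr
        rw [List.length_cons, hn, alternatingWord_succ', ← hxval, hr]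

variable {X Xd : Type*} [AddCommGroup X] [Module ℤ X] [AddCommGroup Xd] [Module ℤ Xd]
  (A : GCM S) (pair : Xd →ₗ[ℤ] X →ₗ[ℤ] ℤ) (α : S → X) (coroot : S → Xd)
  (ρ : W →* Module.End ℤ X)

/-- The action of an alternating word on the simple root `α i`, in coordinates. -/
theorem FRF.coords
    (hpairing : ∀ s t, pair (coroot s) (α t) = A.a s t)
    (hρ : ∀ (s : S) (x : X), ρ (cs.simple s) x = x - pair (coroot s) x • α s)
    (i i' : S) (n : ℕ) :
    ρ (π (alternatingWord i i' n)) (α i) =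
      (FRFseq (A.a i i' * A.a i' i) n).1 • α i +
        ((FRFseq (A.a i i' * A.a i' i) n).2 * (- A.a i' i)) • α i' := by
  set P := A.a i i' * A.a i' i with hP
  have hval : ∀ (c : S) (p q : ℤ), pair (coroot c) (p • α i + q • α i') =
      p * A.a c i + q * A.a c i' := by
    intro c p q
    simp [hpairing]
  induction n with
  | zero =>
    simp [FRFseq, alternatingWord]
  | succ n ih =>
    rw [alternatingWord_succ', cs.wordProd_cons, map_mul, Module.End.mul_apply, ih]
    set x := (FRFseq P n).1
    set z := (FRFseq P n).2
    rcases Nat.even_or_odd n with he | ho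
    · rw [if_pos he, FRFseq, if_pos he]
      rw [hρ, hval, A.diagonal]
      show x • α i + (z * -A.a i' i) • α i' -
          (x * A.a i' i + (z * -A.a i' i) * 2) • α i' =
        x • α i + ((x - z) * - A.a i' i) • α i'
      have hc : (x - z) * - A.a i' i = z * -A.a i' i - (x * A.a i' i + (z * -A.a i' i) * 2) := by
        ring
      rw [hc, sub_zsmul]
      abel
    · have hne : ¬ Even n := Nat.not_even_iff_odd.mpr ho
      rw [if_neg hne, FRFseq, if_neg hne]
      rw [hρ, hval, A.diagonal]
      show x • α i + (z * -A.a i' i) • α i' -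
          (x * 2 + (z * -A.a i' i) * A.a i i') • α i =
        (A.a i i' * A.a i' i * z - x) • α i + (z * - A.a i' i) • α i'
      have hc : A.a i i' * A.a i' i * z - x = x - (x * 2 + (z * -A.a i' i) * A.a i i') := by
        ring
      rw [hc, sub_zsmul]
      abel

/-- The key rank-2 lemma: if `u` is represented by a reduced word over `{i, i'}` and does not
have `i` as a right descent, then `u` sends `α i` to a nonnegative combination of `α i, α i'`. -/
theorem FRF.dihedral [DecidableEq S]
    (hM : ∀ s t, M s t = A.m s t)
    (hpairing : ∀ s t, pair (coroot s) (α t) = A.a s t)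
    (hρ : ∀ (s : S) (x : X), ρ (cs.simple s) x = x - pair (coroot s) x • α s)
    {i i' : S} (hii' : i ≠ i') (σ : List S)
    (hmem : ∀ x ∈ σ, x = i ∨ x = i') (hred : cs.IsReduced σ)
    (hnd : ¬ cs.IsRightDescent (π σ) i) :
    ∃ c d : ℤ, 0 ≤ c ∧ 0 ≤ d ∧ ρ (π σ) (α i) = c • α i + d • α i' := by
  classical
  -- the case of the empty word
  rcases Nat.eq_zero_or_pos σ.length with h0 | hpos
  · rw [List.eq_nil_of_length_eq_zero h0]
    refine ⟨1, 0, zero_le_one, le_refl 0, ?_⟩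
    simp
  -- σ is an alternating word ending in i'
  have hchain := FRF.chain'_of_reduced cs σ hred
  have halt : σ = alternatingWord i i' σ.length := by
    rcases FRF.eq_alternatingWord i i' σ hchain hmem with h | h
    · exact h
    · exfalso
      obtain ⟨k, hk⟩ := Nat.exists_eq_add_of_lt hpos
      rw [Nat.zero_add] at hk
      rw [hk, alternatingWord_succ] at h
      apply hnd
      have hπ : π σ = π (alternatingWord i i' k) * cs.simple i := by
        rw [h, cs.wordProd_concat]
      have h2 : π σ * cs.simple i = π (alternatingWord i i' k) := by
        rw [hπ, cs.simple_mul_simple_cancel_right]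
      have h3 : ℓ (π σ * cs.simple i) ≤ k := by
        rw [h2]
        calc ℓ (π (alternatingWord i i' k)) ≤ (alternatingWord i i' k).length :=
              cs.length_wordProd_le _
          _ = k := length_alternatingWord i i' k
      have h4 : ℓ (π σ) = σ.length := hred
      rw [IsRightDescent]
      omega
  set n := σ.length with hn
  -- basic inequalities on the Cartan entries
  have ha : A.a i i' ≤ 0 := A.off_diagonal_nonpos i i' hii'
  have hb : A.a i' i ≤ 0 := A.off_diagonal_nonpos i' i (Ne.symm hii')
  set P := A.a i i' * A.a i' i with hPdef
  have hP0 : 0 ≤ P := by nlinarith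
  -- the value of the Coxeter matrix entry
  have hMval : M i i' = (if P = 0 then 2 else if P = 1 then 3 else if P = 2 then 4
      else if P = 3 then 6 else 0) := by
    rw [hM i i', GCM.m, if_neg hii']
  -- if the Coxeter matrix entry is nonzero then n < M i i'
  have hlt : M i i' ≠ 0 → n < M i i' := by
    intro hMne
    have hle : n ≤ M i i' := by
      by_contra hcon
      exact (cs.not_isReduced_alternatingWord i i' hMne (by omega)) (halt ▸ hred)
    rcases Nat.lt_or_ge n (M i i') with h | h
    · exact h
    · exfalso
      have hnM : n = M i i' := le_antisymm hle h
      -- use the braid relation to produce a right descent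
      have hbraid : π σ = π (alternatingWord i' i (M i i')) := by
        rw [halt, hnM]
        simpa [CoxeterSystem.braidWord, M.symmetric i' i] using cs.wordProd_braidWord_eq i i'
      obtain ⟨k, hk⟩ := Nat.exists_eq_add_of_lt (Nat.pos_of_ne_zero hMne)
      rw [Nat.zero_add] at hk
      apply hnd
      have hπ : π σ = π (alternatingWord i i' k) * cs.simple i := by
        rw [hbraid, hk, alternatingWord_succ, cs.wordProd_concat]
      have h2 : π σ * cs.simple i = π (alternatingWord i i' k) := by
        rw [hπ, cs.simple_mul_simple_cancel_right]
      have h3 : ℓ (π σ * cs.simple i) ≤ k := by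
        rw [h2]
        calc ℓ (π (alternatingWord i i' k)) ≤ (alternatingWord i i' k).length :=
              cs.length_wordProd_le _
          _ = k := length_alternatingWord i i' k
      have h4 : ℓ (π σ) = σ.length := hred
      rw [IsRightDescent]
      omega
  -- the hypothesis needed for nonnegativity of the coefficients
  have hcond : (P = 0 ∧ n < 2) ∨ (P = 1 ∧ n < 3) ∨ (P = 2 ∧ n < 4) ∨ (P = 3 ∧ n < 6) ∨ 4 ≤ P := by
    by_cases h0 : P = 0
    · left; exact ⟨h0, by have := hlt (by rw [hMval, if_pos h0]; omega); rw [hMval, if_pos h0] at this; omega⟩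
    · by_cases h1 : P = 1
      · right; left
        refine ⟨h1, ?_⟩
        have hMv : M i i' = 3 := by rw [hMval, if_neg h0, if_pos h1]
        have := hlt (by omega); omega
      · by_cases h2 : P = 2
        · right; right; left
          refine ⟨h2, ?_⟩
          have hMv : M i i' = 4 := by rw [hMval, if_neg h0, if_neg h1, if_pos h2]
          have := hlt (by omega); omega
        · by_cases h3 : P = 3
          · right; right; right; left
            refine ⟨h3, ?_⟩
            have hMv : M i i' = 6 := by rw [hMval, if_neg h0, if_neg h1, if_neg h2, if_pos h3]
            have := hlt (by omega); omega
          · right; right; right; right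
            omega
  obtain ⟨hc1, hc2⟩ := FRFseq_nonneg P n hcond
  refine ⟨(FRFseq P n).1, (FRFseq P n).2 * (- A.a i' i), hc1, ?_, ?_⟩
  · exact mul_nonneg hc2 (by omega)
  · rw [halt]
    exact FRF.coords cs A pair α coroot ρ hpairing hρ i i' n

end Aux

/-! ### The main positivity lemma -/

section Main

variable {S : Type*} [DecidableEq S] [Fintype S] {W : Type*} [Group W] {M : CoxeterMatrix S}
  (cs : CoxeterSystem M W)
  {X Xd : Type*} [AddCommGroup X] [Module ℤ X] [AddCommGroup Xd] [Module ℤ Xd]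
  (A : GCM S) (pair : Xd →ₗ[ℤ] X →ₗ[ℤ] ℤ) (α : S → X) (coroot : S → Xd)
  (ρ : W →* Module.End ℤ X)

local prefix:100 "π" => cs.wordProd
local prefix:100 "ℓ" => cs.length

/-- If `i` is not a right descent of `w`, then `w · α i` is a nonnegative combination of
simple roots. -/
theorem FRF.main
    (hM : ∀ s t, M s t = A.m s t)
    (hpairing : ∀ s t, pair (coroot s) (α t) = A.a s t)
    (hρ : ∀ (s : S) (x : X), ρ (cs.simple s) x = x - pair (coroot s) x • α s) :
    ∀ (k : ℕ) (w : W), ℓ w ≤ k → ∀ i : S, ¬ cs.IsRightDescent w i →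
      ∃ c : S → ℤ, (∀ u, 0 ≤ c u) ∧ ρ w (α i) = ∑ u, c u • α u := by
  classical
  have base : ∀ i : S, ∃ c : S → ℤ, (∀ u, 0 ≤ c u) ∧ (α i : X) = ∑ u, c u • α u := by
    intro i
    refine ⟨fun u => if u = i then 1 else 0, fun u => by by_cases h : u = i <;> simp [h], ?_⟩
    simp only [ite_smul, one_zsmul, zero_zsmul, Finset.sum_ite_eq', Finset.mem_univ, if_true]
  intro k
  induction k with
  | zero =>
    intro w hw i _
    have hw1 : w = 1 := cs.length_eq_zero_iff.mp (Nat.le_zero.mp hw)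
    subst hw1
    obtain ⟨c, hc, hsum⟩ := base i
    exact ⟨c, hc, by simpa using hsum⟩
  | succ k ih =>
    intro w hw i hnd
    by_cases hw1 : w = 1
    · subst hw1
      obtain ⟨c, hc, hsum⟩ := base i
      exact ⟨c, hc, by simpa using hsum⟩
    · have hlw0 : ℓ w ≠ 0 := fun h => hw1 (cs.length_eq_zero_iff.mp h)
      obtain ⟨i', hi'⟩ := cs.exists_rightDescent_of_ne_one hw1
      have hii' : i' ≠ i := fun h => hnd (h ▸ hi')
      set Pp : ℕ → Prop := fun n => ∃ σ : List S, σ.length = n ∧ (∀ x ∈ σ, x = i ∨ x = i') ∧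
        ℓ (w * (π σ)⁻¹) + n = ℓ w with hPp
      have hP1 : Pp 1 := by
        refine ⟨[i'], rfl, by simp, ?_⟩
        rw [cs.wordProd_singleton, cs.inv_simple]
        rcases cs.length_mul_simple w i' with h | h
        · exact absurd hi' (by rw [IsRightDescent]; omega)
        · rw [IsRightDescent] at hi'; omega
      have hble : ∀ n, Pp n → n ≤ ℓ w := by
        rintro n ⟨σ, hσ1, _, h3⟩
        omega
      set N := Nat.findGreatest Pp (ℓ w) with hNdef
      have hN : Pp N := Nat.findGreatest_spec (hble 1 hP1) hP1
      have hN1 : 1 ≤ N := Nat.le_findGreatest (hble 1 hP1) hP1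
      obtain ⟨σ, hσn, hσmem, hσl⟩ := hN
      set u := π σ with hu
      set v := w * u⁻¹ with hv
      have hvu : w = v * u := by rw [hv, inv_mul_cancel_right]
      have hσl' : ℓ v + N = ℓ w := hσl
      have hlu : ℓ u = N := by
        have h1 : ℓ w ≤ ℓ v + ℓ u := by rw [hvu]; exact cs.length_mul_le v u
        have h2 : ℓ u ≤ N := hσn ▸ cs.length_wordProd_le σ
        omega
      have hred : cs.IsReduced σ := by
        rw [CoxeterSystem.IsReduced, hσn]
        exact hlu
      have hnv : ∀ x, (x = i ∨ x = i') → ¬ cs.IsRightDescent v x := by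
        intro x hx hdx
        have hdx' : ℓ (v * cs.simple x) < ℓ v := hdx
        have hvx : ℓ (v * cs.simple x) = ℓ v - 1 := by
          rcases cs.length_mul_simple v x with h | h <;> omega
        have hPN1 : Pp (N + 1) := by
          refine ⟨x :: σ, by simp [hσn], ?_, ?_⟩
          · intro y hy
            rcases List.mem_cons.mp hy with rfl | hy'
            · exact hx
            · exact hσmem y hy'
          · have hπ : (π (x :: σ))⁻¹ = u⁻¹ * cs.simple x := by
              rw [cs.wordProd_cons, mul_inv_rev, cs.inv_simple]
            rw [hπ, ← mul_assoc, ← hv, hvx]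
            omega
        exact Nat.findGreatest_is_greatest (Nat.lt_succ_self N) (hble (N+1) hPN1) hPN1
      have hndu : ¬ cs.IsRightDescent u i := by
        intro hd
        have hd' : ℓ (u * cs.simple i) < ℓ u := hd
        have hws : ℓ (w * cs.simple i) = ℓ w + 1 := by
          rcases cs.length_mul_simple w i with h | h
          · exact h
          · rw [IsRightDescent] at hnd; omega
        have h1 : ℓ (w * cs.simple i) ≤ ℓ v + ℓ (u * cs.simple i) := by
          rw [hvu, mul_assoc]
          exact cs.length_mul_le v (u * cs.simple i)
        omega
      obtain ⟨c, d, hc, hd, hcd⟩ :=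
        FRF.dihedral cs A pair α coroot ρ hM hpairing hρ
          (fun h => hii' (h.symm)) σ hσmem hred hndu
      have hvk : ℓ v ≤ k := by omega
      obtain ⟨c1, hc1, he1⟩ := ih v hvk i (hnv i (Or.inl rfl))
      obtain ⟨c2, hc2, he2⟩ := ih v hvk i' (hnv i' (Or.inr rfl))
      refine ⟨fun t => c * c1 t + d * c2 t,
        fun t => add_nonneg (mul_nonneg hc (hc1 t)) (mul_nonneg hd (hc2 t)), ?_⟩
      rw [← hu] at hcd
      have hstep : ρ w (α i) = c • (ρ v (α i)) + d • (ρ v (α i')) := by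
        rw [hvu, map_mul, Module.End.mul_apply, hcd, map_add, map_zsmul, map_zsmul]
      rw [hstep, he1, he2]
      simp only [← Int.cast_smul_eq_zsmul ℤ, Int.cast_id]
      rw [Finset.smul_sum, Finset.smul_sum, ← Finset.sum_add_distrib]
      refine Finset.sum_congr rfl fun t _ => ?_
      module

end Main

/-- **Faithfulness for free realisations (STATEMENT 6).**
Let `A` be a generalised Cartan matrix with a free realisation `(X^∨, X, Δ^∨, Δ)` over `ℤ`
(i.e. the simple roots are `ℤ`-linearly independent).  Then the representation of `W` on `X`
given by `r_s(λ) = λ − ⟨α_s^∨, λ⟩ α_s` is faithful: if `w ∈ W` acts as the identity on `X`,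
then `w = 1`. -/
theorem free_realisation_faithful
    {S : Type*} [DecidableEq S] [Fintype S] (A : GCM S)
    {W : Type*} [Group W] {M : CoxeterMatrix S}
    (cs : CoxeterSystem M W) (hM : ∀ s t, M s t = A.m s t)
    {X Xd : Type*}
    [AddCommGroup X] [Module ℤ X] [Module.Free ℤ X] [Module.Finite ℤ X]
    [AddCommGroup Xd] [Module ℤ Xd] [Module.Free ℤ Xd] [Module.Finite ℤ Xd]
    (pair : Xd →ₗ[ℤ] X →ₗ[ℤ] ℤ)
    (hperf : Function.Bijective pair ∧ Function.Bijective pair.flip)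
    (α : S → X) (coroot : S → Xd)
    (hpairing : ∀ s t, pair (coroot s) (α t) = A.a s t)
    (hfree : LinearIndependent ℤ α)
    (ρ : W →* Module.End ℤ X)
    (hρ : ∀ (s : S) (x : X), ρ (cs.simple s) x = x - pair (coroot s) x • α s) :
    ∀ w : W, (∀ x : X, ρ w x = x) → w = 1 := by
  classical
  intro w hid
  by_contra hw1
  obtain ⟨i, hi⟩ := cs.exists_rightDescent_of_ne_one hw1
  set w' := w * cs.simple i with hw'
  have hndesc : ¬ cs.IsRightDescent w' i := by
    rw [CoxeterSystem.not_isRightDescent_iff]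
    rw [hw', mul_assoc, cs.simple_mul_simple_self, mul_one]
    rw [CoxeterSystem.IsRightDescent] at hi
    rcases cs.length_mul_simple w i with h | h <;> omega
  obtain ⟨c, hc, hsum⟩ :=
    FRF.main cs A pair α coroot ρ hM hpairing hρ (cs.length w') w' (le_refl _) i hndesc
  -- compute ρ w' (α i) = -α i
  have hval : ρ w' (α i) = - α i := by
    rw [hw', map_mul, Module.End.mul_apply, hρ, hpairing, A.diagonal, hid]
    show α i - (2:ℤ) • α i = - α i
    have : ((2:ℤ) : ℤ) • α i = α i + α i := by
      norm_num [two_zsmul]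
    rw [this]
    abel
  rw [hval] at hsum
  -- derive a contradiction from linear independence
  have hzero : ∑ t, (c t + if t = i then 1 else 0) • α t = 0 := by
    have : ∑ t, (c t + if t = i then 1 else 0) • α t
        = (∑ t, c t • α t) + ∑ t, (if t = i then (1:ℤ) else 0) • α t := by
      rw [← Finset.sum_add_distrib]
      exact Finset.sum_congr rfl fun t _ => add_zsmul _ _ _
    rw [this, ← hsum]
    have h2 : ∑ t, (if t = i then (1:ℤ) else 0) • α t = α i := by
      simp only [ite_smul, one_zsmul, zero_zsmul, Finset.sum_ite_eq', Finset.mem_univ, if_true]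
    rw [h2]
    abel
  -- bridge the zsmul / module smul diamond
  have hall : ∀ t, (c t + if t = i then 1 else 0) = 0 := by
    refine Fintype.linearIndependent_iff.mp hfree _ ?_
    simp only [← Int.cast_smul_eq_zsmul ℤ, Int.cast_id] at hzero
    simpa using hzero
  have hci : c i + 1 = 0 := by simpa using hall i
  linarith [hc i]
end

section
/- Let A be a generalised Cartan matrix with a realisation over ℤ whose simple roots are positively independent, i.e. whenever Σ_{s∈S} λ_s α_s = 0 with all λ_s ∈ ℤ_{≥0}, then all λ_s = 0. Then the set of roots is partitioned into positive and negative roots: Φ = Φ⁺ ⊔ (−Φ⁺), where Φ⁺ = Φ ∩ Σ_{s∈S} ℤ_{≥0}α_s. -/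
/-- The set of roots `Φ = {w(α_s) : w ∈ W, s ∈ S}`. -/
def rootSet {S W X : Type*} [Group W] [AddCommGroup X] [Module ℤ X]
    (ρ : W →* Module.End ℤ X) (α : S → X) : Set X :=
  {β | ∃ (w : W) (s : S), β = ρ w (α s)}

/-- The set of positive roots `Φ⁺ = Φ ∩ Σ_{s ∈ S} ℤ≥0 • α_s`. -/
def posRootSet {S W X : Type*} [Fintype S] [Group W] [AddCommGroup X] [Module ℤ X]
    (ρ : W →* Module.End ℤ X) (α : S → X) : Set X :=
  rootSet ρ α ∩ {β | ∃ c : S → ℕ, β = ∑ s, (c s : ℤ) • α s}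

namespace RootsPartitionAux

open CoxeterSystem List

/-- Coefficient recursion for the action of alternating words on a simple root. -/
def abSeq (p q : ℤ) : ℕ → ℤ × ℤ
  | 0 => (1, 0)
  | (k+1) =>
      if Even k then ((abSeq p q k).1, q * (abSeq p q k).1 - (abSeq p q k).2)
      else (p * (abSeq p q k).2 - (abSeq p q k).1, (abSeq p q k).2)

lemma abSeq_nonneg_big (p q : ℤ) (hp : 0 ≤ p) (hq : 0 ≤ q) (h4 : 4 ≤ p * q) (k : ℕ) :
    0 ≤ (abSeq p q k).1 ∧ 0 ≤ (abSeq p q k).2 ∧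
      (Even k → 2 * (abSeq p q k).2 ≤ q * (abSeq p q k).1) ∧
      (¬ Even k → 2 * (abSeq p q k).1 ≤ p * (abSeq p q k).2) := by
  induction k with
  | zero =>
      refine ⟨by norm_num [abSeq], by norm_num [abSeq], ?_, ?_⟩ <;> simp [abSeq] <;> omega
  | succ k ih =>
    obtain ⟨ha, hb, he, ho⟩ := ih
    by_cases hk : Even k
    · specialize he hk
      simp only [abSeq, if_pos hk]
      refine ⟨ha, by nlinarith, ?_, ?_⟩
      · intro h; exact absurd h (by simp [Nat.even_add_one, hk])
      · intro _
        nlinarith [mul_nonneg hp (by linarith : (0:ℤ) ≤ q * (abSeq p q k).1 - 2 * (abSeq p q k).2),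
          mul_nonneg (by linarith : (0:ℤ) ≤ p * q - 4) ha]
    · specialize ho hk
      simp only [abSeq, if_neg hk]
      refine ⟨by nlinarith, hb, ?_, ?_⟩
      · intro _
        nlinarith [mul_nonneg hq (by linarith : (0:ℤ) ≤ p * (abSeq p q k).2 - 2 * (abSeq p q k).1),
          mul_nonneg (by linarith : (0:ℤ) ≤ p * q - 4) hb]
      · intro h; exact absurd (Nat.even_add_one.mpr (by simpa using hk)) h

lemma abSeq_nonneg {S : Type*} [DecidableEq S] (A : GCM S) (s t : S) (hst : s ≠ t) (k : ℕ)
    (hk : A.m s t = 0 ∨ k < A.m s t) :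
    0 ≤ (abSeq (-A.a s t) (-A.a t s) k).1 ∧ 0 ≤ (abSeq (-A.a s t) (-A.a t s) k).2 := by
  set p : ℤ := -A.a s t with hpdef
  set q : ℤ := -A.a t s with hqdef
  have hp : 0 ≤ p := by simp [hpdef]; exact A.off_diagonal_nonpos s t hst
  have hq : 0 ≤ q := by simp [hqdef]; exact A.off_diagonal_nonpos t s hst.symm
  have hpq : A.a s t * A.a t s = p * q := by rw [hpdef, hqdef]; ring
  simp only [GCM.m, if_neg hst, hpq] at hk
  by_cases h0 : p * q = 0
  · rw [if_pos h0] at hk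
    have hk2 : k < 2 := by omega
    interval_cases k <;> simp [abSeq] <;> nlinarith
  rw [if_neg h0] at hk
  by_cases h1 : p * q = 1
  · rw [if_pos h1] at hk
    have hk3 : k < 3 := by omega
    interval_cases k <;> simp [abSeq] <;>
      first
        | nlinarith
        | (constructor <;> nlinarith)
  rw [if_neg h1] at hk
  by_cases h2 : p * q = 2
  · rw [if_pos h2] at hk
    have hk4 : k < 4 := by omega
    interval_cases k <;> simp [abSeq, Nat.even_add_one] <;>
      first
        | nlinarith
        | (constructor <;> nlinarith)
  rw [if_neg h2] at hk
  by_cases h3 : p * q = 3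
  · rw [if_pos h3] at hk
    have hk6 : k < 6 := by omega
    interval_cases k <;> simp [abSeq, Nat.even_add_one] <;>
      first
        | nlinarith [h3, hp, hq]
        | (constructor <;> nlinarith [h3, hp, hq])
        | (refine ⟨by nlinarith [h3, hp, hq], ?_⟩
           have heq2 : q * (p * (q * (p * q - 1) - q) - (p * q - 1)) + q = q * (p * q - 1) := by
             linear_combination q * (p * q - 1) * h3
           nlinarith [heq2, hq, h3])
  rw [if_neg h3] at hk
  have h4 : 4 ≤ p * q := by
    rcases (mul_nonneg hp hq).lt_or_eq with h | h
    · omega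
    · omega
  exact ⟨(abSeq_nonneg_big p q hp hq h4 k).1, (abSeq_nonneg_big p q hp hq h4 k).2.1⟩

section Words

variable {B : Type*} {W : Type*} [Group W] {M : CoxeterMatrix B} (cs : CoxeterSystem M W)

lemma alt_split (i i' : B) (a b : ℕ) :
    alternatingWord i i' (a + b) =
      (if Even b then alternatingWord i i' a else alternatingWord i' i a)
        ++ alternatingWord i i' b := by
  induction b generalizing i i' with
  | zero => simp [alternatingWord]
  | succ b ih =>
    rw [show a + (b+1) = (a+b)+1 from rfl, alternatingWord_succ, ih i' i,
      alternatingWord_succ i i' b]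
    simp only [Nat.even_add_one]
    by_cases hb : Even b <;> simp [hb, List.concat_eq_append, List.append_assoc]

lemma mul_alt (x y : B) (hxy : x ≠ y) (c : B) (hc : c = x ∨ c = y) (k : ℕ) :
    ∃ k' ≤ k + 1,
      cs.simple c * cs.wordProd (alternatingWord x y k) = cs.wordProd (alternatingWord x y k') ∨
      cs.simple c * cs.wordProd (alternatingWord x y k) = cs.wordProd (alternatingWord y x k') := by
  rcases k with _ | k
  · refine ⟨1, by omega, ?_⟩
    rcases hc with rfl | rfl
    · right
      simp [alternatingWord]
    · left
      simp [alternatingWord]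
  · have hsucc : cs.wordProd (alternatingWord x y (k+1)) =
        cs.simple (if Even k then y else x) * cs.wordProd (alternatingWord x y k) := by
      rw [alternatingWord_succ' x y k, cs.wordProd_cons]
    by_cases hcc : c = (if Even k then y else x)
    · refine ⟨k, by omega, Or.inl ?_⟩
      rw [hsucc, hcc, ← mul_assoc, cs.simple_mul_simple_self, one_mul]
    · have hc1 : c = (if Even (k+1) then y else x) := by
        rcases hc with rfl | rfl <;> by_cases hk : Even k <;>
          simp_all [Nat.even_add_one]
      refine ⟨k + 2, by omega, Or.inl ?_⟩
      rw [show k + 2 = (k+1) + 1 from rfl, alternatingWord_succ' x y (k+1), cs.wordProd_cons,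
        hc1]

lemma word_reduce (s t : B) (hst : s ≠ t) :
    ∀ ω : List B, (∀ i ∈ ω, i = s ∨ i = t) →
    ∃ k ≤ ω.length,
      cs.wordProd ω = cs.wordProd (alternatingWord s t k) ∨
      cs.wordProd ω = cs.wordProd (alternatingWord t s k) := by
  intro ω
  induction ω with
  | nil => exact fun _ => ⟨0, by omega, Or.inl (by simp [alternatingWord])⟩
  | cons c ω ih =>
    intro hmem
    obtain ⟨k, hk, h | h⟩ := ih (fun i hi => hmem i (List.mem_cons_of_mem c hi))
    · obtain ⟨k', hk', h'⟩ := mul_alt cs s t hst c (hmem c List.mem_cons_self) k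
      exact ⟨k', by simpa using by omega, by rw [cs.wordProd_cons, h]; exact h'⟩
    · obtain ⟨k', hk', h'⟩ := mul_alt cs t s hst.symm c ((hmem c List.mem_cons_self).symm) k
      exact ⟨k', by simpa using by omega, by rw [cs.wordProd_cons, h]; exact h'.symm⟩

end Words

lemma zsmul_sum' {ι X : Type*} [AddCommGroup X] (a : ℤ) (f : ι → X) (s : Finset ι) :
    a • (∑ i ∈ s, f i) = ∑ i ∈ s, a • f i := by
  classical
  induction s using Finset.induction with
  | empty => simp
  | @insert _ _ h ih => rw [Finset.sum_insert h, Finset.sum_insert h, zsmul_add, ih]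

section Main

variable {S : Type*} [DecidableEq S] [Fintype S] (A : GCM S)
    {W : Type*} [Group W] {M : CoxeterMatrix S} (cs : CoxeterSystem M W)
    {X Xd : Type*} [AddCommGroup X] [Module ℤ X] [AddCommGroup Xd] [Module ℤ Xd]
    (pair : Xd →ₗ[ℤ] X →ₗ[ℤ] ℤ)
    (α : S → X) (coroot : S → Xd)
    (hpairing : ∀ s t, pair (coroot s) (α t) = A.a s t)
    (ρ : W →* Module.End ℤ X)
    (hρ : ∀ (s : S) (x : X), ρ (cs.simple s) x = x - pair (coroot s) x • α s)

include hρ hpairing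

lemma rho_two (i j : S) (a b : ℤ) :
    ρ (cs.simple j) (a • α i + b • α j) = a • α i + (-(A.a j i) * a - b) • α j := by
  rw [hρ]
  rw [show (pair (coroot j)) (a • α i + b • α j) = a * A.a j i + b * 2 by
    rw [map_add, map_zsmul, map_zsmul, hpairing j i, hpairing j j, A.diagonal]
    simp [zsmul_eq_mul]]
  rw [show (-(A.a j i) * a - b) = b - (a * A.a j i + b * 2) by ring, sub_zsmul]
  abel

lemma rho_simple_self (i : S) : ρ (cs.simple i) (α i) = - α i := by
  rw [hρ, hpairing i i, A.diagonal, show (2:ℤ) = 1 + 1 from rfl, add_zsmul, one_zsmul]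
  abel

lemma rho_alt (s t : S) (k : ℕ) :
    ρ (cs.wordProd (alternatingWord s t k)) (α s) =
      (abSeq (-A.a s t) (-A.a t s) k).1 • α s + (abSeq (-A.a s t) (-A.a t s) k).2 • α t := by
  induction k with
  | zero => simp [alternatingWord, abSeq]
  | succ k ih =>
    rw [alternatingWord_succ' s t k, cs.wordProd_cons, map_mul, Module.End.mul_apply, ih]
    by_cases hk : Even k
    · rw [if_pos hk]
      rw [rho_two A cs pair α coroot hpairing ρ hρ s t _ _]
      simp only [abSeq, if_pos hk]
    · rw [if_neg hk]
      rw [add_comm ((abSeq (-A.a s t) (-A.a t s) k).1 • α s)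
        ((abSeq (-A.a s t) (-A.a t s) k).2 • α t)]
      rw [rho_two A cs pair α coroot hpairing ρ hρ t s _ _]
      simp only [abSeq, if_neg hk]
      exact add_comm _ _

/-- The key positivity lemma: if `ℓ(ws) > ℓ(w)` then `w • α s` is a nonnegative
integer combination of simple roots. -/
lemma ascent_pos (hM : ∀ s t, M s t = A.m s t) :
    ∀ (n : ℕ) (w : W) (s : S), cs.length w ≤ n →
      cs.length w < cs.length (w * cs.simple s) →
      ∃ c : S → ℕ, ρ w (α s) = ∑ r, (c r : ℤ) • α r := by
  have hone : ∀ s : S, ∃ c : S → ℕ, ρ (1 : W) (α s) = ∑ r, (c r : ℤ) • α r := by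
    intro s
    refine ⟨fun r => if r = s then 1 else 0, ?_⟩
    rw [map_one]
    simp only [Module.End.one_apply]
    have hr : ∀ r : S, (((if r = s then 1 else 0 : ℕ)) : ℤ) • α r
        = if r = s then α r else 0 := by
      intro r; split <;> simp
    rw [Finset.sum_congr rfl (fun r _ => hr r), Finset.sum_ite_eq' Finset.univ s α]
    simp
  classical
  intro n
  induction n with
  | zero =>
    intro w s hw _
    have : w = 1 := cs.length_eq_zero_iff.mp (Nat.le_zero.mp hw)
    subst this
    exact hone s
  | succ n IH =>
    intro w s hwn hws
    by_cases hw1 : w = 1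
    · subst hw1; exact hone s
    -- pick a right descent t of w
    obtain ⟨t, htd⟩ := cs.exists_rightDescent_of_ne_one hw1
    have hts : t ≠ s := by
      rintro rfl
      exact absurd hws (by simpa [CoxeterSystem.IsRightDescent] using Nat.lt_asymm htd)
    have hst : s ≠ t := hts.symm
    -- minimal representative u of the coset w⟨s,t⟩ occurring in our tracked decompositions
    set U : W → Prop := fun x => ∃ ω : List S, (∀ i ∈ ω, i = s ∨ i = t) ∧
      x * cs.wordProd ω = w ∧ cs.length x + ω.length = cs.length w with hUdef
    have hwt1 : cs.length (w * cs.simple t) + 1 = cs.length w := by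
      have htd' : cs.length (w * cs.simple t) < cs.length w := htd
      rcases cs.length_mul_simple w t with h | h
      · omega
      · exact h
    have hUex : ∃ m, ∃ x, U x ∧ cs.length x = m := by
      refine ⟨_, w * cs.simple t, ⟨[t], by simp, ?_, ?_⟩, rfl⟩
      · rw [cs.wordProd_singleton, cs.simple_mul_simple_cancel_right]
      · simp; omega
    obtain ⟨u, hu, hum⟩ := Nat.find_spec hUex
    have hmin : ∀ x, U x → Nat.find hUex ≤ cs.length x :=
      fun x hx => Nat.find_min' hUex ⟨x, hx, rfl⟩
    obtain ⟨ω, hωmem, hωprod, hωlen⟩ := hu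
    -- u has no descent in {s, t}
    have hnd : ∀ i : S, (i = s ∨ i = t) → cs.length u < cs.length (u * cs.simple i) := by
      intro i hi
      rcases cs.length_mul_simple u i with h | h
      · omega
      · exfalso
        have hx : U (u * cs.simple i) := by
          refine ⟨i :: ω, ?_, ?_, ?_⟩
          · intro j hj
            rcases List.mem_cons.mp hj with rfl | hj
            · exact hi
            · exact hωmem j hj
          · rw [cs.wordProd_cons, ← mul_assoc, cs.simple_mul_simple_cancel_right, hωprod]
          · simp only [List.length_cons]; omega
        have := hmin _ hx
        omega
    -- reduce ω to an alternating word; choose a minimal-length alternating form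
    have hex : ∃ k, cs.wordProd ω = cs.wordProd (alternatingWord s t k) ∨
        cs.wordProd ω = cs.wordProd (alternatingWord t s k) := by
      obtain ⟨k, _, h⟩ := word_reduce cs s t hst ω hωmem
      exact ⟨k, h⟩
    obtain ⟨k₁, hk₁, hk₁min⟩ : ∃ k, (cs.wordProd ω = cs.wordProd (alternatingWord s t k) ∨
        cs.wordProd ω = cs.wordProd (alternatingWord t s k)) ∧
        ∀ k' < k, ¬ (cs.wordProd ω = cs.wordProd (alternatingWord s t k') ∨
          cs.wordProd ω = cs.wordProd (alternatingWord t s k')) :=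
      ⟨Nat.find hex, Nat.find_spec hex, fun k' h => Nat.find_min hex h⟩
    have hk₁le : k₁ ≤ ω.length := by
      obtain ⟨k, hkle, h⟩ := word_reduce cs s t hst ω hωmem
      by_contra hcon
      exact hk₁min k (by omega) h
    have hlen_le : ∀ k' : ℕ, ∀ v : W, v = cs.wordProd (alternatingWord s t k') ∨
        v = cs.wordProd (alternatingWord t s k') → cs.length (u * v) ≤ cs.length u + k' := by
      intro k' v hv
      have : cs.length v ≤ k' := by
        rcases hv with rfl | rfl
        · simpa [length_alternatingWord] using cs.length_wordProd_le (alternatingWord s t k')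
        · simpa [length_alternatingWord] using cs.length_wordProd_le (alternatingWord t s k')
      calc cs.length (u * v) ≤ cs.length u + cs.length v := cs.length_mul_le u v
        _ ≤ cs.length u + k' := by omega
    have huk : cs.length u + k₁ = cs.length w := by
      have h1 : cs.length w ≤ cs.length u + k₁ := by
        rw [← hωprod]
        have := hlen_le k₁ (cs.wordProd ω) hk₁
        rcases hk₁ with h | h <;> omega
      omega
    have hk₁pos : 0 < k₁ := by
      rcases Nat.eq_zero_or_pos k₁ with h0 | h
      · exfalso
        have hv1 : cs.wordProd ω = 1 := by
          rcases hk₁ with h | h <;> rw [h, h0] <;> simp [alternatingWord]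
        rw [hv1, mul_one] at hωprod
        subst hωprod
        exact absurd htd (by have := hnd t (Or.inr rfl); simp [CoxeterSystem.IsRightDescent]; omega)
      · exact h
    -- the alternating word for v must end in t
    have hend : cs.wordProd ω = cs.wordProd (alternatingWord s t k₁) := by
      rcases hk₁ with h | h
      · exact h
      · exfalso
        have hsplit : cs.wordProd (alternatingWord t s k₁) =
            cs.wordProd (alternatingWord s t (k₁ - 1)) * cs.simple s := by
          conv_lhs => rw [show k₁ = (k₁ - 1) + 1 by omega, alternatingWord_succ]
          rw [cs.wordProd_concat]
        have heq : w * cs.simple s = u * cs.wordProd (alternatingWord s t (k₁ - 1)) := by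
          rw [← hωprod, h, hsplit]
          simp only [← mul_assoc]
          rw [cs.simple_mul_simple_cancel_right]
        have hle : cs.length (w * cs.simple s) ≤ cs.length u + (k₁ - 1) := by
          rw [heq]
          exact hlen_le (k₁ - 1) _ (Or.inl rfl)
        omega
    -- k₁ is smaller than the order of st (when that is finite)
    have hmb : A.m s t = 0 ∨ k₁ < A.m s t := by
      by_contra hcon
      push_neg at hcon
      obtain ⟨hm0, hmle⟩ := hcon
      have hmst : M s t = A.m s t := hM s t
      have hm1 : 1 ≤ M s t := by omega
      have hmlek : M s t ≤ k₁ := by omega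
      have hbraid : cs.wordProd (alternatingWord s t (M s t)) =
          cs.wordProd (alternatingWord t s (M s t)) := by
        have hb := cs.wordProd_braidWord_eq s t
        unfold CoxeterSystem.braidWord at hb
        rwa [M.symmetric t s] at hb
      have hts_eq : cs.wordProd (alternatingWord t s (M s t)) =
          cs.wordProd (alternatingWord s t (M s t - 1)) * cs.simple s := by
        conv_lhs => rw [show M s t = (M s t - 1) + 1 by omega, alternatingWord_succ]
        rw [cs.wordProd_concat]
      have hksplit : alternatingWord s t k₁ =
          (if Even (M s t) then alternatingWord s t (k₁ - M s t)
            else alternatingWord t s (k₁ - M s t)) ++ alternatingWord s t (M s t) := by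
        have h := alt_split s t (k₁ - M s t) (M s t)
        rwa [show k₁ - M s t + M s t = k₁ by omega] at h
      have hprelen : cs.length (cs.wordProd (if Even (M s t) then alternatingWord s t (k₁ - M s t)
          else alternatingWord t s (k₁ - M s t))) ≤ k₁ - M s t := by
        split
        · simpa [length_alternatingWord] using
            cs.length_wordProd_le (alternatingWord s t (k₁ - M s t))
        · simpa [length_alternatingWord] using
            cs.length_wordProd_le (alternatingWord t s (k₁ - M s t))
      have heq : w * cs.simple s =
          u * (cs.wordProd (if Even (M s t) then alternatingWord s t (k₁ - M s t)
              else alternatingWord t s (k₁ - M s t)) *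
            cs.wordProd (alternatingWord s t (M s t - 1))) := by
        rw [← hωprod, hend, hksplit, cs.wordProd_append, hbraid, hts_eq]
        simp only [← mul_assoc]
        rw [cs.simple_mul_simple_cancel_right]
      have hle : cs.length (w * cs.simple s) ≤ cs.length u + (k₁ - M s t) + (M s t - 1) := by
        rw [heq]
        have h1 := cs.length_mul_le u (cs.wordProd (if Even (M s t) then
            alternatingWord s t (k₁ - M s t) else alternatingWord t s (k₁ - M s t)) *
          cs.wordProd (alternatingWord s t (M s t - 1)))
        have h2 := cs.length_mul_le (cs.wordProd (if Even (M s t) then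
            alternatingWord s t (k₁ - M s t) else alternatingWord t s (k₁ - M s t)))
          (cs.wordProd (alternatingWord s t (M s t - 1)))
        have h3 : cs.length (cs.wordProd (alternatingWord s t (M s t - 1))) ≤ M s t - 1 := by
          simpa [length_alternatingWord] using cs.length_wordProd_le (alternatingWord s t (M s t - 1))
        omega
      omega
    -- conclude by the rank 2 computation and the induction hypothesis
    have hnn := abSeq_nonneg A s t hst k₁ hmb
    have halt := rho_alt A cs pair α coroot hpairing ρ hρ s t k₁
    obtain ⟨cS, hcS⟩ := IH u s (by omega) (hnd s (Or.inl rfl))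
    obtain ⟨cT, hcT⟩ := IH u t (by omega) (hnd t (Or.inr rfl))
    refine ⟨fun r => (abSeq (-A.a s t) (-A.a t s) k₁).1.toNat * cS r +
      (abSeq (-A.a s t) (-A.a t s) k₁).2.toNat * cT r, ?_⟩
    have hw_eq : ρ w (α s) = ρ u (ρ (cs.wordProd ω) (α s)) := by
      rw [← hωprod, map_mul, Module.End.mul_apply]
    rw [hw_eq, hend, halt, map_add, map_zsmul, map_zsmul, hcS, hcT, zsmul_sum', zsmul_sum',
      ← Finset.sum_add_distrib]
    refine Finset.sum_congr rfl fun r _ => ?_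
    rw [← mul_zsmul, ← mul_zsmul, ← add_zsmul]
    congr 1
    push_cast
    rw [Int.toNat_of_nonneg hnn.1, Int.toNat_of_nonneg hnn.2]

lemma neg_root (w : W) (s : S) : ρ (w * cs.simple s) (α s) = - ρ w (α s) := by
  rw [map_mul, Module.End.mul_apply, rho_simple_self A cs pair α coroot hpairing ρ hρ s, map_neg]

lemma root_ne_zero (w : W) (s : S) : ρ w (α s) ≠ 0 := by
  intro h0
  have hαs : α s = 0 := by
    have h1 : ρ w⁻¹ (ρ w (α s)) = α s := by
      rw [← Module.End.mul_apply, ← map_mul, inv_mul_cancel, map_one, Module.End.one_apply]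
    rw [h0, map_zero] at h1
    exact h1.symm
  have h2 := hpairing s s
  rw [hαs, map_zero, A.diagonal] at h2
  exact absurd h2 (by norm_num)

end Main

end RootsPartitionAux


open RootsPartitionAux CoxeterSystem in
/-- **Partition into positive and negative roots (STATEMENT 7).**
Let `A` be a generalised Cartan matrix with a realisation over `ℤ` whose simple roots are
positively independent.  Then the set of roots is partitioned into positive and negative
roots: `Φ = Φ⁺ ⊔ (−Φ⁺)`, where `Φ⁺ = Φ ∩ Σ_{s∈S} ℤ≥0 • α_s`. -/
theorem roots_partition_pos_neg
    {S : Type*} [DecidableEq S] [Fintype S] (A : GCM S)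
    {W : Type*} [Group W] {M : CoxeterMatrix S}
    (cs : CoxeterSystem M W) (hM : ∀ s t, M s t = A.m s t)
    {X Xd : Type*}
    [AddCommGroup X] [Module ℤ X] [Module.Free ℤ X] [Module.Finite ℤ X]
    [AddCommGroup Xd] [Module ℤ Xd] [Module.Free ℤ Xd] [Module.Finite ℤ Xd]
    (pair : Xd →ₗ[ℤ] X →ₗ[ℤ] ℤ)
    (hperf : Function.Bijective pair ∧ Function.Bijective pair.flip)
    (α : S → X) (coroot : S → Xd)
    (hpairing : ∀ s t, pair (coroot s) (α t) = A.a s t)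
    (hposindep : ∀ lam : S → ℕ, (∑ s : S, (lam s : ℤ) • α s) = 0 → ∀ s, lam s = 0)
    (ρ : W →* Module.End ℤ X)
    (hρ : ∀ (s : S) (x : X), ρ (cs.simple s) x = x - pair (coroot s) x • α s) :
    rootSet ρ α = posRootSet ρ α ∪ (Neg.neg '' posRootSet ρ α) ∧
    posRootSet ρ α ∩ (Neg.neg '' posRootSet ρ α) = ∅ := by
  have key : ∀ (w : W) (s : S),
      (∃ c : S → ℕ, ρ w (α s) = ∑ r, (c r : ℤ) • α r) ∨
      (∃ c : S → ℕ, - ρ w (α s) = ∑ r, (c r : ℤ) • α r) := by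
    intro w s
    rcases cs.length_mul_simple w s with h | h
    · left
      exact ascent_pos A cs pair α coroot hpairing ρ hρ hM (cs.length w) w s le_rfl (by omega)
    · right
      have hcanc : w * cs.simple s * cs.simple s = w := cs.simple_mul_simple_cancel_right s
      have hw' : cs.length (w * cs.simple s) < cs.length (w * cs.simple s * cs.simple s) := by
        rw [hcanc]; omega
      obtain ⟨c, hc⟩ := ascent_pos A cs pair α coroot hpairing ρ hρ hM
        (cs.length (w * cs.simple s)) (w * cs.simple s) s le_rfl hw'
      refine ⟨c, ?_⟩
      rw [← neg_root A cs pair α coroot hpairing ρ hρ w s, hc]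
  constructor
  · ext β
    constructor
    · rintro ⟨w, s, rfl⟩
      rcases key w s with ⟨c, hc⟩ | ⟨c, hc⟩
      · exact Or.inl ⟨⟨w, s, rfl⟩, c, hc⟩
      · refine Or.inr ⟨- ρ w (α s), ⟨⟨w * cs.simple s, s, ?_⟩, c, hc⟩, by simp⟩
        rw [neg_root A cs pair α coroot hpairing ρ hρ w s]
    · rintro (⟨hβ, _⟩ | ⟨γ, ⟨⟨w, s, hγ⟩, _⟩, rfl⟩)
      · exact hβ
      · refine ⟨w * cs.simple s, s, ?_⟩
        rw [neg_root A cs pair α coroot hpairing ρ hρ w s, hγ]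
  · rw [Set.eq_empty_iff_forall_notMem]
    rintro β ⟨⟨⟨w, s, hβ⟩, c, hc⟩, γ, ⟨⟨w', s', hγ⟩, d, hd⟩, hγβ⟩
    have hsum : ∑ r, ((c r + d r : ℕ) : ℤ) • α r = 0 := by
      have : β + γ = 0 := by rw [← hγβ]; abel
      rw [hc, hd, ← Finset.sum_add_distrib] at this
      rw [← this]
      refine Finset.sum_congr rfl fun r _ => ?_
      rw [← add_zsmul]
      exact congrArg (· • α r) (by push_cast; ring)
    have hc0 : ∀ r, c r = 0 := by
      intro r
      have := hposindep (fun r => c r + d r) hsum r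
      omega
    have hβ0 : β = 0 := by
      rw [hc]
      refine Finset.sum_eq_zero fun r _ => ?_
      rw [hc0 r]
      simp
    exact root_ne_zero A cs pair α coroot hpairing ρ hρ w s (by rw [← hβ, hβ0])
end

section
/- Let X be a finite-rank free ℤ-module and let (α_s)_{s∈S} be a finite family of elements of X. Then the family is positively independent (whenever Σ_{s∈S} λ_s α_s = 0 with all λ_s ∈ ℤ_{≥0}, then all λ_s = 0) if and only if there exists a ℤ-linear functional f : X → ℤ with f(α_s) > 0 for all s ∈ S. -/
/-- A rational vector in the real span of (casts of) rational vectors lies in the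
rational span. -/
lemma rat_mem_span_of_real_mem_span {m : Type*} [Fintype m] (A : Set (m → ℚ)) (c : m → ℚ)
    (h : (fun i => (c i : ℝ)) ∈
      Submodule.span ℝ ((fun (x : m → ℚ) => fun i => ((x i : ℝ))) '' A)) :
    c ∈ Submodule.span ℚ A := by
  by_contra hc
  set V := Submodule.span ℚ A with hV
  have hmk : (Submodule.Quotient.mk c : (m → ℚ) ⧸ V) ≠ 0 := by
    simpa [Submodule.Quotient.mk_eq_zero] using hc
  have : ¬ ∀ φ : Module.Dual ℚ ((m → ℚ) ⧸ V), φ (Submodule.Quotient.mk c) = 0 := by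
    rw [Module.forall_dual_apply_eq_zero_iff]; exact hmk
  obtain ⟨φ, hφ⟩ := not_forall.mp this
  classical
  set g : (m → ℚ) →ₗ[ℚ] ℚ := φ ∘ₗ V.mkQ with hg
  have hgA : ∀ a ∈ A, g a = 0 := by
    intro a ha
    have : V.mkQ a = 0 := by
      simpa [Submodule.Quotient.mk_eq_zero] using Submodule.subset_span ha
    simp [hg, this]
  have hgc : g c ≠ 0 := hφ
  set G : (m → ℝ) →ₗ[ℝ] ℝ :=
    ∑ i : m, ((g (Pi.single i 1) : ℚ) : ℝ) • LinearMap.proj i with hG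
  have key : ∀ x : m → ℚ, G (fun i => (x i : ℝ)) = ((g x : ℚ) : ℝ) := by
    intro x
    rw [LinearMap.pi_apply_eq_sum_univ g x]
    push_cast
    simp only [hG, LinearMap.sum_apply, LinearMap.smul_apply, LinearMap.proj_apply,
      smul_eq_mul, mul_comm]
    refine Finset.sum_congr rfl fun i _ => ?_
    push_cast
    have hps : (fun j => if i = j then (1:ℚ) else 0) = Pi.single i 1 := by
      funext j; simp [Pi.single_apply, eq_comm]
    rw [hps]
  have hker : Submodule.span ℝ ((fun (x : m → ℚ) => fun i => ((x i : ℝ))) '' A) ≤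
      LinearMap.ker G := by
    rw [Submodule.span_le]
    rintro _ ⟨a, ha, rfl⟩
    simp [LinearMap.mem_ker, key a, hgA a ha]
  have := hker h
  rw [LinearMap.mem_ker, key c] at this
  exact hgc (by exact_mod_cast this)

/-- Clearing denominators: multiplying a rational by the product of all denominators in a
finite family gives an integer. -/
lemma rat_mul_prod_den {κ : Type*} [Fintype κ] (q : κ → ℚ) (k : κ) :
    (((q k).num * (((∏ j, (q j).den) / (q k).den : ℕ) : ℤ) : ℤ) : ℚ)
      = q k * ((∏ j, (q j).den : ℕ) : ℚ) := by
  obtain ⟨d, hd⟩ := Finset.dvd_prod_of_mem (fun j => (q j).den) (Finset.mem_univ k)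
  rw [hd, Nat.mul_div_cancel_left _ (q k).pos]
  have hden : ((q k).den : ℚ) ≠ 0 := by exact_mod_cast (q k).den_ne_zero
  have hnum : ((q k).num : ℚ) = q k * ((q k).den : ℚ) :=
    (div_eq_iff hden).mp (Rat.num_div_den (q k))
  push_cast
  rw [hnum]; ring

lemma sum_zsmul' {κ M : Type*} [AddCommGroup M] (s : Finset κ) (f : κ → ℤ) (x : M) :
    (∑ k ∈ s, f k) • x = ∑ k ∈ s, f k • x := by
  induction s using Finset.cons_induction with
  | empty => simp
  | cons k s hk ih => rw [Finset.sum_cons, Finset.sum_cons, add_zsmul, ih]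

lemma zsmul_finsupp_apply {ι : Type*} (n : ℤ) (g : ι →₀ ℤ) (i : ι) : (n • g) i = n * g i := by
  have h := map_zsmul (Finsupp.applyAddHom i) n g
  simpa [zsmul_eq_mul] using h


/-- **Positive independence via a strictly positive functional.**
Let `X` be a finite-rank free `ℤ`-module and `(α_s)_{s ∈ S}` a finite family of elements of `X`.
The family is positively independent (i.e. whenever `Σ_s λ_s • α_s = 0` with all `λ_s ∈ ℤ≥0`
then all `λ_s = 0`) if and only if there is a `ℤ`-linear functional `f : X → ℤ` with
`f (α_s) > 0` for all `s ∈ S`. -/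
theorem positively_independent_iff_exists_positive_functional
    {S : Type*} [Fintype S] {X : Type*} [AddCommGroup X] [Module ℤ X]
    [Module.Free ℤ X] [Module.Finite ℤ X] (α : S → X) :
    (∀ lam : S → ℕ, (∑ s : S, (lam s : ℤ) • α s) = 0 → ∀ s, lam s = 0) ↔
      ∃ f : X →ₗ[ℤ] ℤ, ∀ s : S, 0 < f (α s) := by
  classical
  constructor
  · intro h
    set b := Module.Free.chooseBasis ℤ X with hb
    set ι := Module.Free.ChooseBasisIndex ℤ X with hι
    set a : S → ι → ℤ := fun s i => b.repr (α s) i with ha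
    set v : S → (ι → ℝ) := fun s i => (a s i : ℝ) with hv
    have hv0 : (0 : ι → ℝ) ∉ convexHull ℝ (Set.range v) := by
      intro h0
      obtain ⟨κ, hκ, z, w, hzr, haff, hwpos, hwsum, hwz⟩ :=
        eq_pos_convex_span_of_mem_convexHull h0
      have hex : ∀ k : κ, ∃ s : S, v s = z k := fun k => hzr (Set.mem_range_self k)
      choose c hc using hex
      have hzk : ∀ k i, z k i = ((a (c k) i : ℤ) : ℝ) := by
        intro k i; rw [← hc k]
      set P : κ → (Option ι → ℚ) := fun k o => o.elim 1 (fun i => (a (c k) i : ℚ)) with hP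
      set e : Option ι → ℚ := fun o => o.elim 1 (fun _ => 0) with he
      have hmem : (fun o => ((e o : ℚ) : ℝ)) ∈
          Submodule.span ℝ ((fun (x : Option ι → ℚ) => fun o => ((x o : ℝ))) '' (Set.range P)) := by
        have hesum : (fun o => ((e o : ℚ) : ℝ)) = ∑ k, w k • (fun o => ((P k o : ℝ))) := by
          funext o
          have hso : (∑ k, w k • fun o => ((P k o : ℝ))) o = ∑ k, w k * (P k o : ℝ) := by
            simp [Finset.sum_apply, smul_eq_mul]
          rw [hso]
          cases o with
          | none =>
            simp only [he, hP, Option.elim]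
            push_cast
            simp [hwsum]
          | some i =>
            have h2 : (∑ k, w k • z k) i = (0:ℝ) := by rw [hwz]; rfl
            have h3 : ∑ k, w k * ((P k (some i) : ℚ) : ℝ) = ∑ k, w k * z k i := by
              refine Finset.sum_congr rfl fun k _ => ?_
              rw [hzk k i]
              norm_num [hP]
            simp only [he, Option.elim]
            rw [h3]
            push_cast
            rw [← h2]
            simp [Finset.sum_apply, smul_eq_mul]
        rw [hesum]
        exact Submodule.sum_mem _ fun k _ =>
          Submodule.smul_mem _ _ (Submodule.subset_span ⟨P k, Set.mem_range_self k, rfl⟩)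
      have hspan := rat_mem_span_of_real_mem_span (Set.range P) e hmem
      rw [Submodule.mem_span_range_iff_exists_fun] at hspan
      obtain ⟨q, hq⟩ := hspan
      have hqsum : ∑ k, q k = 1 := by
        have := congrFun hq none
        simpa [hP, he, Finset.sum_apply, smul_eq_mul] using this
      have hqa : ∀ i, ∑ k, q k * (a (c k) i : ℚ) = 0 := by
        intro i
        have := congrFun hq (some i)
        simpa [hP, he, Finset.sum_apply, smul_eq_mul] using this
      have hq0 : ∑ k, ((q k : ℝ)) • z k = 0 := by
        funext i
        have : (∑ k, ((q k : ℝ)) • z k) i = ∑ k, (q k : ℝ) * z k i := by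
          simp [Finset.sum_apply, smul_eq_mul]
        rw [this]
        have hcast : ∑ k, (q k : ℝ) * z k i = ((∑ k, q k * (a (c k) i : ℚ) : ℚ) : ℝ) := by
          push_cast
          refine Finset.sum_congr rfl fun k _ => ?_
          rw [hzk k i]
        rw [hcast, hqa i]
        simp
      have huniq : ∀ k, w k = (q k : ℝ) := by
        have hsum0 : ∑ k, (w k - (q k : ℝ)) = 0 := by
          rw [Finset.sum_sub_distrib, hwsum]
          have : ∑ k, ((q k : ℝ)) = ((∑ k, q k : ℚ) : ℝ) := by push_cast; rfl
          rw [this, hqsum]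
          norm_num
        have hcomb : ∑ k, (w k - (q k : ℝ)) • z k = 0 := by
          have : ∀ k, (w k - (q k : ℝ)) • z k = w k • z k - (q k : ℝ) • z k := by
            intro k; rw [sub_smul]
          simp_rw [this]
          rw [Finset.sum_sub_distrib, hwz, hq0, sub_zero]
        intro k
        have := affineIndependent_iff.mp haff Finset.univ _ hsum0 hcomb k (Finset.mem_univ k)
        linarith
      have hqpos : ∀ k, 0 < q k := by
        intro k
        have := hwpos k
        rw [huniq k] at this
        exact_mod_cast this
      set N : ℕ := ∏ j, (q j).den with hN
      have hNpos : 0 < N := Finset.prod_pos fun j _ => (q j).pos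
      set mm : κ → ℤ := fun k => (q k).num * ((N / (q k).den : ℕ) : ℤ) with hmm
      have hmq : ∀ k, ((mm k : ℤ) : ℚ) = q k * (N : ℚ) := fun k => rat_mul_prod_den q k
      have hmpos : ∀ k, 0 < mm k := by
        intro k
        have hp : (0:ℚ) < q k * (N:ℚ) := mul_pos (hqpos k) (by exact_mod_cast hNpos)
        rw [← hmq k] at hp
        exact_mod_cast hp
      set lam : S → ℕ := fun s => ∑ k, if c k = s then (mm k).toNat else 0 with hlam
      have hcastlam : ∀ s, ((lam s : ℕ) : ℤ) = ∑ k, if c k = s then mm k else 0 := by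
        intro s
        rw [hlam]
        push_cast
        refine Finset.sum_congr rfl fun k _ => ?_
        split <;> simp [Int.toNat_of_nonneg (hmpos _).le]
      have hzero : ∑ s : S, (lam s : ℤ) • α s = 0 := by
        have hswap : ∑ s : S, (lam s : ℤ) • α s = ∑ k, mm k • α (c k) := by
          simp_rw [hcastlam]
          calc ∑ s : S, (∑ k, if c k = s then mm k else 0) • α s
              = ∑ s : S, ∑ k, (if c k = s then mm k else 0) • α s := by
                exact Finset.sum_congr rfl fun s _ => sum_zsmul' _ _ _
            _ = ∑ k, ∑ s : S, (if c k = s then mm k else 0) • α s := Finset.sum_comm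
            _ = ∑ k, mm k • α (c k) := by
                refine Finset.sum_congr rfl fun k _ => ?_
                rw [Finset.sum_eq_single (c k)]
                · simp
                · intro s _ hs
                  rw [if_neg fun hh => hs hh.symm, zero_zsmul]
                · intro hmem
                  exact absurd (Finset.mem_univ _) hmem
        rw [hswap]
        apply b.repr.injective
        rw [map_zero]
        ext i
        have hrepr : (b.repr (∑ k, mm k • α (c k))) i = ∑ k, mm k * a (c k) i := by
          rw [show b.repr (∑ k, mm k • α (c k)) = ∑ k, b.repr (mm k • α (c k)) from
            map_sum _ _ _]
          rw [Finsupp.finset_sum_apply]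
          refine Finset.sum_congr rfl fun k _ => ?_
          rw [map_zsmul b.repr, zsmul_finsupp_apply]
        rw [hrepr]
        simp only [Finsupp.coe_zero, Pi.zero_apply]
        have hQ : ((∑ k, mm k * a (c k) i : ℤ) : ℚ) = 0 := by
          push_cast
          simp only [hmq]
          calc ∑ k, q k * (N:ℚ) * ((a (c k) i : ℤ) : ℚ)
              = (N:ℚ) * ∑ k, q k * ((a (c k) i : ℤ) : ℚ) := by
                rw [Finset.mul_sum]
                exact Finset.sum_congr rfl fun k _ => by ring
            _ = 0 := by rw [hqa i]; ring
        exact_mod_cast hQ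
      have hall := h lam hzero
      have hk0 : Nonempty κ := by
        by_contra hempty
        rw [not_nonempty_iff] at hempty
        rw [Finset.univ_eq_empty, Finset.sum_empty] at hwsum
        norm_num at hwsum
      obtain ⟨k0⟩ := hk0
      have hle : (mm k0).toNat ≤ lam (c k0) := by
        rw [hlam]
        have := Finset.single_le_sum
          (f := fun k => if c k = c k0 then (mm k).toNat else 0)
          (fun k _ => by positivity) (Finset.mem_univ k0)
        simpa using this
      rw [hall (c k0)] at hle
      have := hmpos k0
      omega
    have hcl : IsClosed (convexHull ℝ (Set.range v)) :=
      ((Set.finite_range v).isCompact_convexHull ℝ).isClosed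
    obtain ⟨F, u, hFlt, hu0⟩ :=
      geometric_hahn_banach_closed_point (convex_convexHull ℝ _) hcl hv0
    have hu : u < 0 := by simpa using hu0
    have hFs : ∀ s, F (v s) < u := fun s =>
      hFlt _ (subset_convexHull ℝ _ (Set.mem_range_self s))
    set cc : ι → ℝ := fun i => -F (Pi.single i 1) with hcc
    have hFv : ∀ s, -F (v s) = ∑ i, v s i * cc i := by
      intro s
      have hpi := LinearMap.pi_apply_eq_sum_univ (F : (ι → ℝ) →ₗ[ℝ] ℝ) (v s)
      rw [ContinuousLinearMap.coe_coe] at hpi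
      rw [hpi, ← Finset.sum_neg_distrib]
      refine Finset.sum_congr rfl fun i _ => ?_
      have hcci : cc i = -F (Pi.single i 1) := rfl
      have hps : (fun j => if i = j then (1:ℝ) else 0) = Pi.single i 1 := by
        funext j; simp [Pi.single_apply, eq_comm]
      rw [hcci, smul_eq_mul, hps]
      ring
    set δ : ℝ := -u with hδ
    have hδpos : 0 < δ := by rw [hδ]; linarith
    set B : ℝ := ∑ s : S, ∑ i, |v s i| with hB
    have hBnn : 0 ≤ B :=
      Finset.sum_nonneg fun s _ => Finset.sum_nonneg fun i _ => abs_nonneg _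
    set ε : ℝ := δ / (B + 1) with hε
    have hεpos : 0 < ε := div_pos hδpos (by linarith)
    have hqex : ∀ i : ι, ∃ qi : ℚ, cc i < qi ∧ (qi : ℝ) < cc i + ε :=
      fun i => exists_rat_btwn (lt_add_of_pos_right _ hεpos)
    choose q hq1 hq2 using hqex
    have hposS : ∀ s, 0 < ∑ i, (q i : ℝ) * v s i := by
      intro s
      have h1 : δ < -F (v s) := by have := hFs s; rw [hδ]; linarith
      have hBs : ∑ i, |v s i| ≤ B :=
        Finset.single_le_sum (f := fun t => ∑ i, |v t i|)
          (fun t _ => Finset.sum_nonneg fun i _ => abs_nonneg _) (Finset.mem_univ s)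
      have hsplit : ∑ i, (q i : ℝ) * v s i
          = (∑ i, cc i * v s i) + ∑ i, ((q i : ℝ) - cc i) * v s i := by
        rw [← Finset.sum_add_distrib]
        exact Finset.sum_congr rfl fun i _ => by ring
      have hFeq : ∑ i, cc i * v s i = -F (v s) := by
        rw [hFv s]
        exact Finset.sum_congr rfl fun i _ => by ring
      have herr : |∑ i, ((q i : ℝ) - cc i) * v s i| ≤ ε * ∑ i, |v s i| := by
        calc |∑ i, ((q i : ℝ) - cc i) * v s i| ≤ ∑ i, |((q i : ℝ) - cc i) * v s i| :=
              Finset.abs_sum_le_sum_abs _ _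
          _ ≤ ∑ i, ε * |v s i| := by
              refine Finset.sum_le_sum fun i _ => ?_
              rw [abs_mul]
              refine mul_le_mul_of_nonneg_right ?_ (abs_nonneg _)
              have h1 := hq1 i
              have h2 := hq2 i
              rw [abs_le]
              constructor <;> linarith
          _ = ε * ∑ i, |v s i| := by rw [Finset.mul_sum]
      have hεB : ε * ∑ i, |v s i| ≤ ε * B := mul_le_mul_of_nonneg_left hBs hεpos.le
      have hring : ε * (B + 1) = δ := div_mul_cancel₀ δ (by linarith)
      have hεBδ : ε * B < δ := by nlinarith
      have hlow : -(ε * B) ≤ ∑ i, ((q i : ℝ) - cc i) * v s i := by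
        have habs := (abs_le.mp (herr.trans hεB)).1
        linarith
      rw [hsplit, hFeq]
      linarith
    have hposQ : ∀ s, 0 < ∑ i, q i * ((a s i : ℤ) : ℚ) := by
      intro s
      have hcast : ((∑ i, q i * ((a s i : ℤ) : ℚ) : ℚ) : ℝ) = ∑ i, (q i : ℝ) * v s i := by
        push_cast
        rfl
      have := hposS s
      rw [← hcast] at this
      exact_mod_cast this
    set N : ℕ := ∏ j, (q j).den with hN
    have hNpos : 0 < N := Finset.prod_pos fun j _ => (q j).pos
    set mz : ι → ℤ := fun i => (q i).num * ((N / (q i).den : ℕ) : ℤ) with hmz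
    have hmzq : ∀ i, ((mz i : ℤ) : ℚ) = q i * (N : ℚ) := fun i => rat_mul_prod_den q i
    have hposZ : ∀ s, 0 < ∑ i, mz i * a s i := by
      intro s
      have hQ : (0 : ℚ) < ((∑ i, mz i * a s i : ℤ) : ℚ) := by
        push_cast
        simp only [hmzq]
        calc (0:ℚ) < (N : ℚ) * ∑ i, q i * ((a s i : ℤ) : ℚ) :=
              mul_pos (by exact_mod_cast hNpos) (hposQ s)
          _ = ∑ i, q i * (N : ℚ) * ((a s i : ℤ) : ℚ) := by
              rw [Finset.mul_sum]
              exact Finset.sum_congr rfl fun i _ => by ring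
      exact_mod_cast hQ
    refine ⟨{ toFun := fun x => ∑ i, mz i * b.repr x i,
              map_add' := fun x y => by
                simp [map_add, Finsupp.add_apply, mul_add, Finset.sum_add_distrib],
              map_smul' := fun r x => by
                simp only [RingHom.id_apply, smul_eq_mul, map_smul, Finsupp.smul_apply,
                  Finset.mul_sum]
                exact Finset.sum_congr rfl fun i _ => by ring }, fun s => hposZ s⟩


  · rintro ⟨f, hf⟩ lam hsum s
    have h0 : ∑ t : S, (lam t : ℤ) * f (α t) = 0 := by
      have := congrArg f hsum
      simpa [map_sum, smul_eq_mul] using this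
    have hnn : ∀ t ∈ Finset.univ, (0:ℤ) ≤ (lam t : ℤ) * f (α t) :=
      fun t _ => mul_nonneg (Int.natCast_nonneg _) (hf t).le
    have := (Finset.sum_eq_zero_iff_of_nonneg hnn).mp h0 s (Finset.mem_univ s)
    rcases mul_eq_zero.mp this with h1 | h2
    · exact_mod_cast h1
    · exact absurd h2 (hf s).ne'
end
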